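/- Suppose the finite simple graph H satisfies: (i) for every clique K of H (including the empty clique), the induced subgraph of H on V ∖ K is nonempty and connected; and (ii) for every clique K of H and every vertex v ∈ K, there is a vertex w ∉ K adjacent to v in H. Then the initial state 𝒮 together with the system of moves {m_{vw}} is a legal system on Γ = 𝕋(H): every state in the orbit M + 𝒮 = {m + 𝒮 : m ∈ M} is a legal state of Γ, i.e., its preimages of 0 and of 1 each induce a nonempty connected subgraph of Γ. -/

import Mathlib

/-- The vertex set of the thickened graph `𝕋(H)`: ordered pairs of distinct, non-adjacent
vertices of `H` (pairs at "cubical distance ≥ 2", where cubes are modeled by cliques of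
`H`). -/
def statePairs {V : Type*} (H : SimpleGraph V) : Set (V × V) :=
  {p | p.1 ≠ p.2 ∧ ¬ H.Adj p.1 p.2}

/-- The initial state `𝒮`: with respect to a fixed linear order on `V`, the pair `(v, w)`
is assigned `1` iff `v < w`. -/
def initialState {V : Type*} [LinearOrder V] (H : SimpleGraph V) :
    statePairs H → ZMod 2 :=
  fun p => if p.1.1 < p.1.2 then 1 else 0

open Classical in
/-- The move `m_{vw}`: the state taking the value `1` exactly at the vertices `(v, w)` and
`(w, v)` and `0` elsewhere. -/
noncomputable def move {V : Type*} (H : SimpleGraph V) (v w : V) :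
    statePairs H → ZMod 2 :=
  fun p => if p.1 = (v, w) ∨ p.1 = (w, v) then 1 else 0

/-- The subgroup `M` of the group of states (under pointwise addition) generated by all
the moves `m_{vw}` for `(v, w) ∈ P`. -/
noncomputable def moveGroup {V : Type*} (H : SimpleGraph V) :
    AddSubgroup (statePairs H → ZMod 2) :=
  AddSubgroup.closure {f | ∃ v w : V, (v, w) ∈ statePairs H ∧ f = move H v w}


/-- The thickened graph `Γ = 𝕋(H)` on the vertex set `P = statePairs H`: two distinct
pairs are adjacent iff their first coordinates are equal or adjacent in `H`. -/
def TGraph {V : Type*} (H : SimpleGraph V) : SimpleGraph (statePairs H) where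
  Adj p q := p ≠ q ∧ (p.1.1 = q.1.1 ∨ H.Adj p.1.1 q.1.1)
  symm := by
    constructor
    rintro p q ⟨h₁, h₂⟩
    refine ⟨h₁.symm, ?_⟩
    rcases h₂ with h | h
    · exact Or.inl h.symm
    · exact Or.inr h.symm
  loopless := by constructor; rintro p ⟨h₁, -⟩; exact h₁ rfl

/-- A state `φ` on the vertex set of a graph `Γ` is *legal* if the subgraphs induced on
`φ⁻¹(0)` and `φ⁻¹(1)` are both nonempty and connected. -/
def IsLegalState {W : Type*} (Γ : SimpleGraph W) (φ : W → ZMod 2) : Prop :=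
  ∀ ε : ZMod 2, (φ ⁻¹' {ε}).Nonempty ∧ (Γ.induce (φ ⁻¹' {ε})).Connected

/-- If `(v, w)` is a state pair, so is `(w, v)`. -/
lemma pair_swap_mem {V : Type*} {H : SimpleGraph V} {v w : V}
    (h : (v, w) ∈ statePairs H) : (w, v) ∈ statePairs H :=
  ⟨h.1.symm, fun hadj => h.2 hadj.symm⟩

/-- Every element of the move group is symmetric under swapping the two coordinates. -/
lemma move_group_symm {V : Type*} {H : SimpleGraph V} {m : statePairs H → ZMod 2}
    (hm : m ∈ moveGroup H) (v w : V) (h : (v, w) ∈ statePairs H)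
    (h' : (w, v) ∈ statePairs H) : m ⟨(v, w), h⟩ = m ⟨(w, v), h'⟩ := by
  classical
  induction hm using AddSubgroup.closure_induction with
  | mem f hf =>
      obtain ⟨a, b, -, rfl⟩ := hf
      have hiff : ((v, w) = (a, b) ∨ (v, w) = (b, a)) ↔
          ((w, v) = (a, b) ∨ (w, v) = (b, a)) := by
        constructor <;> (rintro (h | h) <;> simp_all [Prod.ext_iff])
      simp only [move, hiff]
  | zero => rfl
  | add f g hf hg ihf ihg => simp only [Pi.add_apply, ihf, ihg]
  | neg f hf ihf => simp only [Pi.neg_apply, ihf]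

/-- Suppose the finite simple graph `H` satisfies:
(i) for every clique `K` of `H` (including the empty clique), the induced subgraph of `H`
on the complement of `K` is nonempty and connected (no disconnecting cliques); and
(ii) for every clique `K` of `H` and vertex `v ∈ K` there is a vertex `w ∉ K` adjacent to
`v` (no isolated corners).
Then the initial state `𝒮` together with the system of moves `m_{vw}` is a legal system
on `Γ = 𝕋(H)`: every state in the orbit `M + 𝒮` is a legal state of `Γ`. -/
theorem legal_system_of_thickening {V : Type*} [Fintype V] [LinearOrder V]
    (H : SimpleGraph V)
    (hconn : ∀ K : Set V, H.IsClique K → (Kᶜ).Nonempty ∧ (H.induce Kᶜ).Connected)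
    (hcorner : ∀ K : Set V, H.IsClique K → ∀ v ∈ K, ∃ w ∉ K, H.Adj v w)
    (m : statePairs H → ZMod 2) (hm : m ∈ moveGroup H) :
    IsLegalState (TGraph H) (m + initialState H) := by
  classical
  set φ : statePairs H → ZMod 2 := m + initialState H with hφdef
  -- antisymmetry of φ
  have hswap : ∀ (v w : V) (h : (v, w) ∈ statePairs H) (h' : (w, v) ∈ statePairs H),
      φ ⟨(v, w), h⟩ ≠ φ ⟨(w, v), h'⟩ := by
    intro v w h h' hEq
    have hms := move_group_symm hm v w h h'
    have hne : v ≠ w := h.1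
    have hS : initialState H ⟨(v, w), h⟩ ≠ initialState H ⟨(w, v), h'⟩ := by
      rcases lt_or_gt_of_ne hne with hlt | hlt
      · simp [initialState, hlt, not_lt_of_gt hlt]
      · simp [initialState, hlt, not_lt_of_gt hlt]
    apply hS
    have : m ⟨(v, w), h⟩ + initialState H ⟨(v, w), h⟩
        = m ⟨(w, v), h'⟩ + initialState H ⟨(w, v), h'⟩ := hEq
    rw [hms] at this
    exact add_left_cancel this
  intro ε
  -- the set of first coordinates achieving value ε
  set A : Set V := {v | ∃ w, ∃ h : (v, w) ∈ statePairs H, φ ⟨(v, w), h⟩ = ε} with hA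
  have hclique : H.IsClique Aᶜ := by
    intro x hx y hy hxy
    by_contra hadj
    have hxP : (x, y) ∈ statePairs H := ⟨hxy, hadj⟩
    have hyP : (y, x) ∈ statePairs H := pair_swap_mem hxP
    have h1 : φ ⟨(x, y), hxP⟩ ≠ ε := fun hc => hx ⟨y, hxP, hc⟩
    have h2 : φ ⟨(y, x), hyP⟩ ≠ ε := fun hc => hy ⟨x, hyP, hc⟩
    have hz : ∀ a b e : ZMod 2, a ≠ e → b ≠ e → a = b := by decide
    exact hswap x y hxP hyP (hz _ _ _ h1 h2)
  obtain ⟨hAne, hAconn⟩ := hconn Aᶜ hclique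
  rw [compl_compl] at hAne hAconn
  set S : Set ↥(statePairs H) := φ ⁻¹' {ε} with hS
  -- nonempty
  obtain ⟨v, hvA⟩ := hAne
  obtain ⟨w, hw, hwε⟩ := hvA
  have hSne : S.Nonempty := ⟨⟨(v, w), hw⟩, hwε⟩
  refine ⟨hSne, ?_⟩
  rw [SimpleGraph.connected_iff]
  refine ⟨?_, ⟨⟨hSne.choose, hSne.choose_spec⟩⟩⟩
  -- preconnectedness
  have key : ∀ {a b : ↥A} (wk : (H.induce A).Walk a b) (p q : ↥S),
      p.1.1.1 = ↑a → q.1.1.1 = ↑b → ((TGraph H).induce S).Reachable p q := by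
    intro a b wk
    induction wk with
    | nil =>
        intro p q hp hq
        by_cases hpq : p = q
        · exact hpq ▸ SimpleGraph.Reachable.refl p
        · refine SimpleGraph.Adj.reachable ?_
          show (TGraph H).Adj p.1 q.1
          exact ⟨fun hc => hpq (Subtype.ext hc), Or.inl (hp.trans hq.symm)⟩
    | cons hadj wk2 ih =>
        rename_i a c b
        intro p q hp hq
        obtain ⟨wc, hwc, hwcε⟩ := c.2
        set r : ↥S := ⟨⟨(↑c, wc), hwc⟩, hwcε⟩ with hr
        have hHadj : H.Adj ↑a ↑c := hadj
        have hpr : ((TGraph H).induce S).Adj p r := by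
          show (TGraph H).Adj p.1 r.1
          refine ⟨?_, Or.inr ?_⟩
          · intro hc
            have h1 : p.1.1.1 = (↑c : V) := congrArg (fun x : ↥(statePairs H) => x.1.1) hc
            exact hHadj.ne (hp.symm.trans h1)
          · show H.Adj p.1.1.1 (↑c : V)
            rw [hp]; exact hHadj
        exact (hpr.reachable).trans (ih r q rfl hq)
  intro p q
  have hpA : p.1.1.1 ∈ A := ⟨p.1.1.2, by
    refine ⟨?_, ?_⟩
    · exact p.1.2
    · exact p.2⟩
  have hqA : q.1.1.1 ∈ A := ⟨q.1.1.2, q.1.2, q.2⟩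
  obtain ⟨wk⟩ := hAconn.preconnected ⟨p.1.1.1, hpA⟩ ⟨q.1.1.1, hqA⟩
  exact key wk p q rfl rfl
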